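/- arXiv:1304.7804 — 5 statements merged into one kernel-verified Lean document; each statement's English description precedes it below -/
import Mathlib

section
/- Let S be a finite set with |S| ≥ 2, let Υ be any hierarchical division of S, and let 𝒞 be any partition of S other than the trivial partition {S}. Then there exist distinct parts C₁, C₂ ∈ 𝒞 and subsets C′₁ ⊆ C₁ and C′₂ ⊆ C₂ such that C′₁ and C′₂ are siblings in Υ (i.e., they are the sets represented by the two children of some internal node of Υ). -/
/-- A full binary tree with leaves labeled by elements of `X`. -/
inductive BTree (X : Type) where
  | leaf : X → BTree X
  | node : BTree X → BTree X → BTree X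

/-- The set represented by a node of the tree: the set of labels of its leaves. -/
def BTree.leaves {X : Type} [DecidableEq X] : BTree X → Finset X
  | .leaf x => {x}
  | .node l r => l.leaves ∪ r.leaves

/-- Every internal node's set is the *disjoint* union of its children's sets. -/
def BTree.DisjointLeaves {X : Type} [DecidableEq X] : BTree X → Prop
  | .leaf _ => True
  | .node l r => Disjoint l.leaves r.leaves ∧ l.DisjointLeaves ∧ r.DisjointLeaves

/-- `s` occurs as a subtree of `t`. -/
inductive BTree.IsSubtree {X : Type} : BTree X → BTree X → Prop where
  | refl (t : BTree X) : IsSubtree t t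
  | left {s l r : BTree X} : IsSubtree s l → IsSubtree s (.node l r)
  | right {s l r : BTree X} : IsSubtree s r → IsSubtree s (.node l r)

/-- `𝒞` is a partition of the finite set `S`: pairwise disjoint nonempty parts
whose union is `S`. -/
def IsPartitionOf {X : Type} [DecidableEq X] (𝒞 : Finset (Finset X)) (S : Finset X) : Prop :=
  (∀ C ∈ 𝒞, C.Nonempty) ∧
  (∀ C₁ ∈ 𝒞, ∀ C₂ ∈ 𝒞, C₁ ≠ C₂ → Disjoint C₁ C₂) ∧
  𝒞.sup id = S

theorem btree_subtree_trans {X : Type} {a b c : BTree X}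
    (hab : BTree.IsSubtree a b) (hbc : BTree.IsSubtree b c) : BTree.IsSubtree a c := by
  induction hbc with
  | refl => exact hab
  | left _ ih => exact BTree.IsSubtree.left ih
  | right _ ih => exact BTree.IsSubtree.right ih

theorem btree_leaves_mono {X : Type} [DecidableEq X] {s t : BTree X}
    (h : BTree.IsSubtree s t) : s.leaves ⊆ t.leaves := by
  induction h with
  | refl => exact Finset.Subset.refl _
  | left _ ih => exact ih.trans (Finset.subset_union_left)
  | right _ ih => exact ih.trans (Finset.subset_union_right)

/-- Let `S` be a finite set with `|S| ≥ 2`, let `Υ` be any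
hierarchical division of `S` (a full binary tree with root set `S`, leaves the
singletons of `S`, and each internal node the disjoint union of its children),
and let `𝒞` be any partition of `S` other than `{S}`.  Then there exist
distinct parts `C₁, C₂ ∈ 𝒞` and subsets `C′₁ ⊆ C₁`, `C′₂ ⊆ C₂` such that `C′₁`
and `C′₂` are siblings in `Υ` (the sets of the two children of some internal node). -/
theorem hierarchical_division_meets_partition {X : Type} [DecidableEq X]
    (S : Finset X) (hS : 2 ≤ S.card)
    (Υ : BTree X) (hroot : Υ.leaves = S) (hdisj : Υ.DisjointLeaves)
    (𝒞 : Finset (Finset X)) (hpart : IsPartitionOf 𝒞 S) (hne : 𝒞 ≠ {S}) :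
    ∃ C₁ ∈ 𝒞, ∃ C₂ ∈ 𝒞, C₁ ≠ C₂ ∧
      ∃ l r : BTree X, BTree.IsSubtree (BTree.node l r) Υ ∧
        l.leaves ⊆ C₁ ∧ r.leaves ⊆ C₂ := by
  obtain ⟨hnonempty, hdisj', hsup⟩ := hpart
  -- elements of S lie in some part
  have hmem : ∀ x ∈ S, ∃ C ∈ 𝒞, x ∈ C := by
    intro x hx
    rw [← hsup] at hx
    simpa using Finset.mem_sup.mp hx
  -- root is not contained in a single part
  have hbad : ¬ ∃ C ∈ 𝒞, Υ.leaves ⊆ C := by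
    rintro ⟨C, hC, hsubC⟩
    rw [hroot] at hsubC
    have hCS : C ⊆ S := by
      rw [← hsup]; exact Finset.le_sup (f := id) hC
    have hCeq : C = S := le_antisymm hCS hsubC
    apply hne
    apply Finset.eq_singleton_iff_unique_mem.mpr
    refine ⟨hCeq ▸ hC, ?_⟩
    intro D hD
    by_contra hDS
    have : Disjoint D C := hdisj' D hD C hC (hCeq ▸ hDS)
    obtain ⟨d, hd⟩ := hnonempty D hD
    have hdS : D ⊆ S := by rw [← hsup]; exact Finset.le_sup (f := id) hD
    exact (Finset.disjoint_left.mp this hd) (hCeq ▸ hdS hd)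
  -- main induction
  suffices h : ∀ t : BTree X, t.IsSubtree Υ → (¬ ∃ C ∈ 𝒞, t.leaves ⊆ C) →
      ∃ C₁ ∈ 𝒞, ∃ C₂ ∈ 𝒞, C₁ ≠ C₂ ∧
        ∃ l r : BTree X, BTree.IsSubtree (BTree.node l r) Υ ∧
          l.leaves ⊆ C₁ ∧ r.leaves ⊆ C₂ from
    h Υ (BTree.IsSubtree.refl Υ) hbad
  intro t
  induction t with
  | leaf x =>
    intro hsub hb
    exfalso
    have hx : x ∈ S := by
      rw [← hroot]
      exact btree_leaves_mono hsub (by simp [BTree.leaves])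
    obtain ⟨C, hC, hxC⟩ := hmem x hx
    exact hb ⟨C, hC, by simp [BTree.leaves, hxC]⟩
  | node l r ihl ihr =>
    intro hsub hb
    by_cases hl : ∃ C ∈ 𝒞, l.leaves ⊆ C
    · by_cases hr : ∃ C ∈ 𝒞, r.leaves ⊆ C
      · obtain ⟨C₁, hC₁, hl₁⟩ := hl
        obtain ⟨C₂, hC₂, hr₂⟩ := hr
        have hne12 : C₁ ≠ C₂ := by
          rintro rfl
          exact hb ⟨C₁, hC₁, by simp [BTree.leaves, Finset.union_subset hl₁ hr₂]⟩
        exact ⟨C₁, hC₁, C₂, hC₂, hne12, l, r, hsub, hl₁, hr₂⟩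
      · exact ihr (btree_subtree_trans (BTree.IsSubtree.right (BTree.IsSubtree.refl r)) hsub) hr
    · exact ihl (btree_subtree_trans (BTree.IsSubtree.left (BTree.IsSubtree.refl l)) hsub) hl
end

section
/- Let α be an assembly that is producible at temperature τ in the hierarchical model, with |dom α| ≥ 2, and let 𝒞 be any partition of dom α other than the trivial partition {dom α}. Then there exist two distinct parts Cᵢ, Cⱼ ∈ 𝒞 such that the total strength of interacting glues between tiles of α at positions in Cᵢ and adjacent positions in Cⱼ is at least τ. -/
/-- A tile system over a type `T` of tile types: each tile type has, in each
direction (unit vector of `ℤ × ℤ`), a glue label (a natural number `ℕ`), and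
each glue label has a nonnegative integer strength given by `str`. -/
structure TileSystem (T : Type) where
  glue : T → ℤ × ℤ → ℕ
  str : ℕ → ℕ

/-- The four unit-vector directions of `ℤ²`. -/
def dirs : Finset (ℤ × ℤ) := {(0,1), (0,-1), (1,0), (-1,0)}

/-- An assembly: a partial function from `ℤ²` to tile types. -/
abbrev Assembly (T : Type) := ℤ × ℤ → Option T

/-- `D` is the domain of the assembly `α`. -/
def IsDom {T : Type} (α : Assembly T) (D : Finset (ℤ × ℤ)) : Prop :=
  ∀ p, (α p).isSome ↔ p ∈ D

/-- The strength of the bond between positions `p` and `q` in `α`: it is the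
strength of the common glue if `q - p` is a unit direction and the glue of the
tile at `p` in direction `q - p` matches the glue of the tile at `q` in
direction `p - q`; otherwise `0`. -/
def bond {T : Type} (ts : TileSystem T) (α : Assembly T) (p q : ℤ × ℤ) : ℕ :=
  match α p, α q with
  | some t, some t' =>
      if q - p ∈ dirs ∧ ts.glue t (q - p) = ts.glue t' (p - q)
      then ts.str (ts.glue t (q - p)) else 0
  | _, _ => 0

/-- Two positions of `α` interact if they hold tiles binding with positive strength. -/
def Interacts {T : Type} (ts : TileSystem T) (α : Assembly T) (p q : ℤ × ℤ) : Prop :=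
  0 < bond ts α p q

/-- Total strength of the interacting glues between positions in `A` and
(adjacent) positions in `B`. -/
def strengthBetween {T : Type} (ts : TileSystem T) (α : Assembly T)
    (A B : Finset (ℤ × ℤ)) : ℕ :=
  ∑ p ∈ A, ∑ q ∈ B, bond ts α p q

/-- `α` is `τ`-stable: every partition of its domain into two nonempty parts is
crossed by interacting glues of total strength at least `τ`. -/
def Stable {T : Type} (ts : TileSystem T) (α : Assembly T) (τ : ℕ) : Prop :=
  ∀ D A B : Finset (ℤ × ℤ), IsDom α D → A ∪ B = D → Disjoint A B →
    A.Nonempty → B.Nonempty → τ ≤ strengthBetween ts α A B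

/-- The union of two assemblies (agreeing with `α` wherever `α` is defined). -/
def aunion {T : Type} (α β : Assembly T) : Assembly T :=
  fun p => match α p with
    | some t => some t
    | none => β p

/-- Producibility in the hierarchical model at temperature `τ`: an assembly is
producible if it is a single tile, or the `τ`-stable union of two producible
assemblies with disjoint domains. -/
inductive Producible {T : Type} (ts : TileSystem T) (τ : ℕ) : Assembly T → Prop where
  | single (p : ℤ × ℤ) (t : T) :
      Producible ts τ (fun q => if q = p then some t else none)
  | union {α β : Assembly T} :
      Producible ts τ α → Producible ts τ β →
      (∀ p, α p = none ∨ β p = none) →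
      Stable ts (aunion α β) τ →
      Producible ts τ (aunion α β)

/-- Two assemblies are consistent if they agree wherever both are defined. -/
def Consistent {T : Type} (α β : Assembly T) : Prop :=
  ∀ p t t', α p = some t → β p = some t' → t = t'

/-- `α` is a subassembly of `β`. -/
def Subassembly {T : Type} (α β : Assembly T) : Prop :=
  ∀ p t, α p = some t → β p = some t

/-- A producible assembly is terminal if no producible assembly can stably attach to it. -/
def Terminal {T : Type} (ts : TileSystem T) (τ : ℕ) (α : Assembly T) : Prop :=
  ∀ β : Assembly T, Producible ts τ β → (∀ p, α p = none ∨ β p = none) →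
    ¬ Stable ts (aunion α β) τ

/-- The hierarchical system uniquely produces `α` if the set of producible
terminal assemblies equals `{α}`. -/
def UniquelyProduces {T : Type} (ts : TileSystem T) (τ : ℕ) (α : Assembly T) : Prop :=
  {γ : Assembly T | Producible ts τ γ ∧ Terminal ts τ γ} = {α}

/-- `𝒞` is a partition of the finite set `D`: pairwise disjoint nonempty parts
whose union is `D`. -/
def IsPartition (𝒞 : Finset (Finset (ℤ × ℤ))) (D : Finset (ℤ × ℤ)) : Prop :=
  (∀ C ∈ 𝒞, C.Nonempty) ∧
  (∀ C₁ ∈ 𝒞, ∀ C₂ ∈ 𝒞, C₁ ≠ C₂ → Disjoint C₁ C₂) ∧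
  𝒞.sup id = D

/-! ### Auxiliary lemmas -/

lemma producible_exists_some {T : Type} {ts : TileSystem T} {τ : ℕ} {α : Assembly T}
    (h : Producible ts τ α) : ∃ p, (α p).isSome := by
  induction h with
  | single p t => exact ⟨p, by simp⟩
  | @union β γ h1 h2 hd hs ih1 ih2 =>
    obtain ⟨p, hp⟩ := ih1
    refine ⟨p, ?_⟩
    cases hb : β p with
    | none => rw [hb] at hp; simp at hp
    | some t => simp [aunion, hb]

lemma bond_mono {T : Type} (ts : TileSystem T) {β α : Assembly T}
    (h : Subassembly β α) (p q : ℤ × ℤ) : bond ts β p q ≤ bond ts α p q := by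
  unfold bond
  cases hb : β p with
  | none => exact Nat.zero_le _
  | some t =>
    cases hbq : β q with
    | none => exact Nat.zero_le _
    | some t' => rw [h p t hb, h q t' hbq]

lemma subassembly_left {T : Type} (β γ : Assembly T) : Subassembly β (aunion β γ) := by
  intro p t h; simp [aunion, h]

lemma subassembly_right {T : Type} {β γ : Assembly T}
    (hd : ∀ p, β p = none ∨ γ p = none) : Subassembly γ (aunion β γ) := by
  intro p t h
  rcases hd p with h' | h'
  · simp [aunion, h', h]
  · rw [h'] at h; exact absurd h (by simp)

lemma strengthBetween_mono {T : Type} (ts : TileSystem T) {β α : Assembly T}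
    (h : Subassembly β α) {A' A B' B : Finset (ℤ × ℤ)} (hA : A' ⊆ A) (hB : B' ⊆ B) :
    strengthBetween ts β A' B' ≤ strengthBetween ts α A B := by
  unfold strengthBetween
  calc ∑ p ∈ A', ∑ q ∈ B', bond ts β p q
      ≤ ∑ p ∈ A', ∑ q ∈ B', bond ts α p q := by
        exact Finset.sum_le_sum fun p _ => Finset.sum_le_sum fun q _ => bond_mono ts h p q
    _ ≤ ∑ p ∈ A', ∑ q ∈ B, bond ts α p q := by
        exact Finset.sum_le_sum fun p _ =>
          Finset.sum_le_sum_of_subset_of_nonneg hB (fun _ _ _ => Nat.zero_le _)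
    _ ≤ ∑ p ∈ A, ∑ q ∈ B, bond ts α p q :=
        Finset.sum_le_sum_of_subset_of_nonneg hA (fun _ _ _ => Nat.zero_le _)

lemma restrict_partition {𝒞 : Finset (Finset (ℤ × ℤ))} {D Dβ : Finset (ℤ × ℤ)}
    (hpart : IsPartition 𝒞 D) (hsub : Dβ ⊆ D) :
    IsPartition ((𝒞.image (· ∩ Dβ)).erase ∅) Dβ := by
  obtain ⟨hne, hdisj, hsup⟩ := hpart
  refine ⟨?_, ?_, ?_⟩
  · intro C hC
    exact Finset.nonempty_iff_ne_empty.2 (Finset.ne_of_mem_erase hC)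
  · intro C₁ hC₁ C₂ hC₂ hne'
    obtain ⟨A, hA, rfl⟩ := Finset.mem_image.1 (Finset.mem_of_mem_erase hC₁)
    obtain ⟨B, hB, rfl⟩ := Finset.mem_image.1 (Finset.mem_of_mem_erase hC₂)
    have hAB : A ≠ B := fun h => hne' (by rw [h])
    exact (hdisj A hA B hB hAB).mono Finset.inter_subset_left Finset.inter_subset_left
  · have : ((𝒞.image (· ∩ Dβ)).erase ⊥).sup id = (𝒞.image (· ∩ Dβ)).sup id :=
      Finset.sup_erase_bot _
    rw [show (∅ : Finset (ℤ × ℤ)) = ⊥ from rfl, this, Finset.sup_image]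
    have : 𝒞.sup (id ∘ (· ∩ Dβ)) = 𝒞.sup id ⊓ Dβ := by
      rw [Finset.sup_inf_distrib_right]
      rfl
    rw [this, hsup]
    exact inf_eq_right.2 hsub

lemma key_lemma {T : Type} (ts : TileSystem T) (τ : ℕ) {α : Assembly T}
    (hprod : Producible ts τ α) :
    ∀ D : Finset (ℤ × ℤ), IsDom α D → ∀ 𝒞 : Finset (Finset (ℤ × ℤ)),
      IsPartition 𝒞 D → 𝒞 ≠ {D} →
      ∃ C₁ ∈ 𝒞, ∃ C₂ ∈ 𝒞, C₁ ≠ C₂ ∧ τ ≤ strengthBetween ts α C₁ C₂ := by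
  induction hprod with
  | single p t =>
    intro D hD 𝒞 hpart hne
    exfalso; apply hne
    obtain ⟨hne', hdisj, hsup⟩ := hpart
    have hDp : D = {p} := by
      ext q
      rw [← hD q]
      by_cases h : q = p <;> simp [h]
    have hpD : p ∈ D := by rw [hDp]; exact Finset.mem_singleton_self p
    have hall : ∀ C ∈ 𝒞, C = D := by
      intro C hC
      have hCD : C ⊆ D := hsup ▸ Finset.le_sup (f := id) hC
      obtain ⟨x, hx⟩ := hne' C hC
      have hxD := hCD hx
      rw [hDp] at hxD ⊢
      have : x = p := Finset.mem_singleton.1 hxD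
      subst this
      apply Finset.Subset.antisymm (hDp ▸ hCD)
      intro y hy
      rw [Finset.mem_singleton] at hy
      exact hy ▸ hx
    have h𝒞ne : 𝒞.Nonempty := by
      rcases Finset.eq_empty_or_nonempty 𝒞 with h | h
      · exfalso; rw [h] at hsup; simp at hsup
        rw [← hsup] at hpD; simp at hpD
      · exact h
    obtain ⟨C, hC⟩ := h𝒞ne
    ext E
    simp only [Finset.mem_singleton]
    constructor
    · exact hall E
    · rintro rfl; exact (hall C hC) ▸ hC
  | @union β γ h1 h2 hd hstab ih1 ih2 =>
    intro D hD 𝒞 hpart hne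
    classical
    set Dβ : Finset (ℤ × ℤ) := D.filter (fun p => (β p).isSome) with hDβdef
    set Dγ : Finset (ℤ × ℤ) := D.filter (fun p => (γ p).isSome) with hDγdef
    have hmemD : ∀ p, (β p).isSome ∨ (γ p).isSome → p ∈ D := by
      intro p hp
      rw [← hD p]
      rcases hp with h | h
      · cases hb : β p with
        | none => rw [hb] at h; simp at h
        | some t => simp [aunion, hb]
      · cases hg : γ p with
        | none => rw [hg] at h; simp at h
        | some t =>
          rcases hd p with h' | h'
          · simp [aunion, h', hg]
          · rw [h'] at h; simp at h
    have hDβ : IsDom β Dβ := by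
      intro p
      simp only [hDβdef, Finset.mem_filter]
      constructor
      · intro h; exact ⟨hmemD p (Or.inl h), h⟩
      · exact fun h => h.2
    have hDγ : IsDom γ Dγ := by
      intro p
      simp only [hDγdef, Finset.mem_filter]
      constructor
      · intro h; exact ⟨hmemD p (Or.inr h), h⟩
      · exact fun h => h.2
    have hsubβ : Dβ ⊆ D := Finset.filter_subset _ _
    have hsubγ : Dγ ⊆ D := Finset.filter_subset _ _
    have hDβne : Dβ.Nonempty := by
      obtain ⟨p, hp⟩ := producible_exists_some h1
      exact ⟨p, (hDβ p).1 hp⟩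
    have hDγne : Dγ.Nonempty := by
      obtain ⟨p, hp⟩ := producible_exists_some h2
      exact ⟨p, (hDγ p).1 hp⟩
    have hunionD : Dβ ∪ Dγ = D := by
      ext p
      simp only [Finset.mem_union, hDβdef, hDγdef, Finset.mem_filter]
      constructor
      · rintro (⟨h, _⟩ | ⟨h, _⟩) <;> exact h
      · intro hp
        have : ((aunion β γ) p).isSome := (hD p).2 hp
        cases hb : β p with
        | some t => exact Or.inl ⟨hp, rfl⟩
        | none =>
          right
          refine ⟨hp, ?_⟩
          unfold aunion at this
          rw [hb] at this
          exact this
    have hdisjD : Disjoint Dβ Dγ := by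
      rw [Finset.disjoint_left]
      intro p hp hq
      have hb := ((hDβ p).2 hp)
      have hg := ((hDγ p).2 hq)
      rcases hd p with h | h <;> [rw [h] at hb; rw [h] at hg] <;> simp_all
    obtain ⟨hne𝒞, hdisj𝒞, hsup𝒞⟩ := hpart
    have hCsubD : ∀ C ∈ 𝒞, C ⊆ D := fun C hC => hsup𝒞 ▸ Finset.le_sup (f := id) hC
    -- restricted partitions
    set 𝒞β := (𝒞.image (· ∩ Dβ)).erase ∅ with h𝒞β
    set 𝒞γ := (𝒞.image (· ∩ Dγ)).erase ∅ with h𝒞γ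
    have hpartβ : IsPartition 𝒞β Dβ := restrict_partition ⟨hne𝒞, hdisj𝒞, hsup𝒞⟩ hsubβ
    have hpartγ : IsPartition 𝒞γ Dγ := restrict_partition ⟨hne𝒞, hdisj𝒞, hsup𝒞⟩ hsubγ
    by_cases hβtriv : 𝒞β = {Dβ}
    · by_cases hγtriv : 𝒞γ = {Dγ}
      · -- both restrictions trivial: 𝒞 = {C₁, C₂}, use stability
        have hDβmem : Dβ ∈ 𝒞β := hβtriv ▸ Finset.mem_singleton_self _
        have hDγmem : Dγ ∈ 𝒞γ := hγtriv ▸ Finset.mem_singleton_self _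
        obtain ⟨C₁, hC₁, hC₁eq⟩ := Finset.mem_image.1 (Finset.mem_of_mem_erase hDβmem)
        obtain ⟨C₂, hC₂, hC₂eq⟩ := Finset.mem_image.1 (Finset.mem_of_mem_erase hDγmem)
        have hβC₁ : Dβ ⊆ C₁ := by rw [← hC₁eq]; exact Finset.inter_subset_left
        have hγC₂ : Dγ ⊆ C₂ := by rw [← hC₂eq]; exact Finset.inter_subset_left
        -- every part is C₁ or C₂
        have hrestr : ∀ C ∈ 𝒞, C = C₁ ∨ C = C₂ := by
          intro C hC
          have hCβ : C ∩ Dβ = Dβ ∨ C ∩ Dβ = ∅ := by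
            by_cases h : C ∩ Dβ = ∅
            · exact Or.inr h
            · left
              have : C ∩ Dβ ∈ 𝒞β :=
                Finset.mem_erase.2 ⟨h, Finset.mem_image_of_mem _ hC⟩
              rw [hβtriv] at this
              exact Finset.mem_singleton.1 this
          have hCγ : C ∩ Dγ = Dγ ∨ C ∩ Dγ = ∅ := by
            by_cases h : C ∩ Dγ = ∅
            · exact Or.inr h
            · left
              have : C ∩ Dγ ∈ 𝒞γ :=
                Finset.mem_erase.2 ⟨h, Finset.mem_image_of_mem _ hC⟩
              rw [hγtriv] at this
              exact Finset.mem_singleton.1 this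
          rcases hCβ with h | h
          · left
            by_contra hCC
            have := hdisj𝒞 C hC C₁ hC₁ hCC
            have hsub : Dβ ⊆ C := by rw [← h]; exact Finset.inter_subset_left
            obtain ⟨x, hx⟩ := hDβne
            exact (Finset.disjoint_left.1 this (hsub hx)) (hβC₁ hx)
          · rcases hCγ with h' | h'
            · right
              by_contra hCC
              have := hdisj𝒞 C hC C₂ hC₂ hCC
              have hsub : Dγ ⊆ C := by rw [← h']; exact Finset.inter_subset_left
              obtain ⟨x, hx⟩ := hDγne
              exact (Finset.disjoint_left.1 this (hsub hx)) (hγC₂ hx)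
            · exfalso
              obtain ⟨x, hx⟩ := hne𝒞 C hC
              have hxD : x ∈ D := hCsubD C hC hx
              rw [← hunionD, Finset.mem_union] at hxD
              rcases hxD with hxm | hxm
              · have : x ∈ C ∩ Dβ := Finset.mem_inter.2 ⟨hx, hxm⟩
                rw [h] at this; simp at this
              · have : x ∈ C ∩ Dγ := Finset.mem_inter.2 ⟨hx, hxm⟩
                rw [h'] at this; simp at this
        have hC₁C₂ : C₁ ≠ C₂ := by
          intro h
          apply hne
          have hall : ∀ C ∈ 𝒞, C = C₁ := by
            intro C hC
            rcases hrestr C hC with h' | h'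
            · exact h'
            · exact h' ▸ h.symm
          have h𝒞eq : 𝒞 = {C₁} := by
            ext E
            simp only [Finset.mem_singleton]
            exact ⟨hall E, fun hE => hE ▸ hC₁⟩
          have : C₁ = D := by rw [← hsup𝒞, h𝒞eq]; simp
          rw [h𝒞eq, this]
        have hABunion : C₁ ∪ C₂ = D := by
          apply Finset.Subset.antisymm
          · exact Finset.union_subset (hCsubD C₁ hC₁) (hCsubD C₂ hC₂)
          · rw [← hunionD]
            exact Finset.union_subset_union hβC₁ hγC₂
        have hABdisj : Disjoint C₁ C₂ := hdisj𝒞 C₁ hC₁ C₂ hC₂ hC₁C₂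
        refine ⟨C₁, hC₁, C₂, hC₂, hC₁C₂, ?_⟩
        exact hstab D C₁ C₂ hD hABunion hABdisj (hne𝒞 C₁ hC₁) (hne𝒞 C₂ hC₂)
      · -- restriction to γ nontrivial: use ih2
        obtain ⟨E₁, hE₁, E₂, hE₂, hE12, hstr⟩ := ih2 Dγ hDγ 𝒞γ hpartγ hγtriv
        obtain ⟨C₁, hC₁, hC₁eq⟩ := Finset.mem_image.1 (Finset.mem_of_mem_erase hE₁)
        obtain ⟨C₂, hC₂, hC₂eq⟩ := Finset.mem_image.1 (Finset.mem_of_mem_erase hE₂)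
        refine ⟨C₁, hC₁, C₂, hC₂, fun h => hE12 (by rw [← hC₁eq, ← hC₂eq, h]), ?_⟩
        calc τ ≤ strengthBetween ts γ E₁ E₂ := hstr
          _ ≤ strengthBetween ts (aunion β γ) C₁ C₂ := by
              rw [← hC₁eq, ← hC₂eq]
              exact strengthBetween_mono ts (subassembly_right hd)
                Finset.inter_subset_left Finset.inter_subset_left
    · -- restriction to β nontrivial: use ih1
      obtain ⟨E₁, hE₁, E₂, hE₂, hE12, hstr⟩ := ih1 Dβ hDβ 𝒞β hpartβ hβtriv
      obtain ⟨C₁, hC₁, hC₁eq⟩ := Finset.mem_image.1 (Finset.mem_of_mem_erase hE₁)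
      obtain ⟨C₂, hC₂, hC₂eq⟩ := Finset.mem_image.1 (Finset.mem_of_mem_erase hE₂)
      refine ⟨C₁, hC₁, C₂, hC₂, fun h => hE12 (by rw [← hC₁eq, ← hC₂eq, h]), ?_⟩
      calc τ ≤ strengthBetween ts β E₁ E₂ := hstr
        _ ≤ strengthBetween ts (aunion β γ) C₁ C₂ := by
            rw [← hC₁eq, ← hC₂eq]
            exact strengthBetween_mono ts (subassembly_left β γ)
              Finset.inter_subset_left Finset.inter_subset_left

/-- If `α` is producible at temperature `τ` in the hierarchical
model, `|dom α| ≥ 2`, and `𝒞` is any partition of `dom α` other than `{dom α}`,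
then some two distinct parts of `𝒞` have attachment strength at least `τ` in `α`. -/
theorem mergeable_pair_exists {T : Type} [Fintype T] (ts : TileSystem T)
    (τ : ℕ) (hτ : 0 < τ) (α : Assembly T) (hprod : Producible ts τ α)
    (D : Finset (ℤ × ℤ)) (hD : IsDom α D) (hcard : 2 ≤ D.card)
    (𝒞 : Finset (Finset (ℤ × ℤ))) (hpart : IsPartition 𝒞 D) (hne : 𝒞 ≠ {D}) :
    ∃ C₁ ∈ 𝒞, ∃ C₂ ∈ 𝒞, C₁ ≠ C₂ ∧ τ ≤ strengthBetween ts α C₁ C₂ := by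
  exact key_lemma ts τ hprod D hD 𝒞 hpart hne
end

section
/- If α and β are τ-stable assemblies that are consistent (they agree on every position in dom α ∩ dom β) and dom α ∩ dom β ≠ ∅, then the assembly α ∪ β is τ-stable. -/
lemma bond_congr {T : Type} (ts : TileSystem T) (γ δ : Assembly T) (p q : ℤ × ℤ)
    (hp : γ p = δ p) (hq : γ q = δ q) : bond ts γ p q = bond ts δ p q := by
  unfold bond; rw [hp, hq]

/-- If `α` and `β` are `τ`-stable assemblies that are
consistent and have overlapping domains, then `α ∪ β` is `τ`-stable. -/
theorem union_stable {T : Type} [Fintype T] (ts : TileSystem T)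
    (τ : ℕ) (hτ : 0 < τ) (α β : Assembly T)
    (Dα Dβ : Finset (ℤ × ℤ)) (hDα : IsDom α Dα) (hDβ : IsDom β Dβ)
    (hover : (Dα ∩ Dβ).Nonempty)
    (hcons : Consistent α β)
    (hsα : Stable ts α τ) (hsβ : Stable ts β τ) :
    Stable ts (aunion α β) τ := by
  intro D A B hD hAB hdisj hA hB
  have hDeq : D = Dα ∪ Dβ := by
    ext p
    rw [← hD p, Finset.mem_union, ← hDα p, ← hDβ p]
    unfold aunion
    cases h : α p <;> simp [h]
  have hunα : ∀ p ∈ Dα, aunion α β p = α p := by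
    intro p hp
    have hs := (hDα p).mpr hp
    unfold aunion
    cases h : α p with
    | none => rw [h] at hs; simp at hs
    | some t => rfl
  have hunβ : ∀ p ∈ Dβ, aunion α β p = β p := by
    intro p hp
    have hb := (hDβ p).mpr hp
    unfold aunion
    cases h : α p with
    | none => rfl
    | some t =>
      obtain ⟨t', hb'⟩ := Option.isSome_iff_exists.mp hb
      rw [hb', hcons p t t' h hb']
  have key : ∀ (γ : Assembly T) (Dγ : Finset (ℤ × ℤ)), IsDom γ Dγ → Stable ts γ τ →
      (∀ p ∈ Dγ, aunion α β p = γ p) → Dγ ⊆ D →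
      (A ∩ Dγ).Nonempty → (B ∩ Dγ).Nonempty →
      τ ≤ strengthBetween ts (aunion α β) A B := by
    intro γ Dγ hdom hst hag hsub hAn hBn
    have hpart : (A ∩ Dγ) ∪ (B ∩ Dγ) = Dγ := by
      rw [← Finset.union_inter_distrib_right, hAB]
      exact Finset.inter_eq_right.mpr hsub
    have hdis : Disjoint (A ∩ Dγ) (B ∩ Dγ) :=
      hdisj.mono Finset.inter_subset_left Finset.inter_subset_left
    have h1 := hst Dγ (A ∩ Dγ) (B ∩ Dγ) hdom hpart hdis hAn hBn
    calc τ ≤ strengthBetween ts γ (A ∩ Dγ) (B ∩ Dγ) := h1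
      _ = strengthBetween ts (aunion α β) (A ∩ Dγ) (B ∩ Dγ) := by
          unfold strengthBetween
          refine Finset.sum_congr rfl fun p hp => Finset.sum_congr rfl fun q hq => ?_
          exact (bond_congr ts _ _ p q (hag p (Finset.mem_inter.mp hp).2)
            (hag q (Finset.mem_inter.mp hq).2)).symm
      _ ≤ ∑ p ∈ A ∩ Dγ, ∑ q ∈ B, bond ts (aunion α β) p q :=
          Finset.sum_le_sum fun p _ => Finset.sum_le_sum_of_subset Finset.inter_subset_left
      _ ≤ strengthBetween ts (aunion α β) A B :=
          Finset.sum_le_sum_of_subset Finset.inter_subset_left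
  obtain ⟨x, hx⟩ := hover
  have hxα := (Finset.mem_inter.mp hx).1
  have hxβ := (Finset.mem_inter.mp hx).2
  by_cases hAα : (A ∩ Dα).Nonempty
  · by_cases hBα : (B ∩ Dα).Nonempty
    · exact key α Dα hDα hsα hunα (hDeq ▸ Finset.subset_union_left) hAα hBα
    · -- B ∩ Dα = ∅, so Dα ⊆ A, x ∈ A, and B ⊆ Dβ
      have hBe : B ∩ Dα = ∅ := Finset.not_nonempty_iff_eq_empty.mp hBα
      have hxA : x ∈ A := by
        have hxD : x ∈ D := hDeq ▸ Finset.mem_union_left _ hxα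
        rcases Finset.mem_union.mp (hAB ▸ hxD) with h | h
        · exact h
        · exact absurd (Finset.mem_inter.mpr ⟨h, hxα⟩) (by simp [hBe])
      have hBβ : (B ∩ Dβ).Nonempty := by
        obtain ⟨b, hb⟩ := hB
        have hbD : b ∈ D := hAB ▸ Finset.mem_union_right _ hb
        rcases Finset.mem_union.mp (hDeq ▸ hbD) with h | h
        · exact absurd (Finset.mem_inter.mpr ⟨hb, h⟩) (by simp [hBe])
        · exact ⟨b, Finset.mem_inter.mpr ⟨hb, h⟩⟩
      exact key β Dβ hDβ hsβ hunβ (hDeq ▸ Finset.subset_union_right)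
        ⟨x, Finset.mem_inter.mpr ⟨hxA, hxβ⟩⟩ hBβ
  · -- A ∩ Dα = ∅, so x ∈ B, and A ⊆ Dβ
    have hAe : A ∩ Dα = ∅ := Finset.not_nonempty_iff_eq_empty.mp hAα
    have hxB : x ∈ B := by
      have hxD : x ∈ D := hDeq ▸ Finset.mem_union_left _ hxα
      rcases Finset.mem_union.mp (hAB ▸ hxD) with h | h
      · exact absurd (Finset.mem_inter.mpr ⟨h, hxα⟩) (by simp [hAe])
      · exact h
    have hAβ : (A ∩ Dβ).Nonempty := by
      obtain ⟨a, ha⟩ := hA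
      have haD : a ∈ D := hAB ▸ Finset.mem_union_left _ ha
      rcases Finset.mem_union.mp (hDeq ▸ haD) with h | h
      · exact absurd (Finset.mem_inter.mpr ⟨ha, h⟩) (by simp [hAe])
      · exact ⟨a, Finset.mem_inter.mpr ⟨ha, h⟩⟩
    exact key β Dβ hDβ hsβ hunβ (hDeq ▸ Finset.subset_union_right)
      hAβ ⟨x, Finset.mem_inter.mpr ⟨hxB, hxβ⟩⟩
end

section
/- Let T be a finite set of tile types with no functionally null glues, let 𝒯 = (T, σ, 1) be a seeded tile assembly system at temperature 1, and let α be a producible assembly of 𝒯. Then α is terminal if and only if for every position p ∈ dom α and every direction d with p + d ∉ dom α, the glue of α(p) in direction d has strength 0. -/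
/-- Producibility in the seeded model with seed assembly `σ` at temperature `τ`:
an assembly is producible if it is the seed, or is obtained from a producible
assembly by placing a single tile at an empty position adjacent to the assembly
such that the result is `τ`-stable. -/
inductive SProducible {T : Type} (ts : TileSystem T) (σ : Assembly T) (τ : ℕ) :
    Assembly T → Prop where
  | seed : SProducible ts σ τ σ
  | attach {α : Assembly T} (p : ℤ × ℤ) (t : T) :
      SProducible ts σ τ α →
      α p = none →
      (∃ d ∈ dirs, (α (p + d)).isSome) →
      Stable ts (Function.update α p (some t)) τ →
      SProducible ts σ τ (Function.update α p (some t))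

/-- In the seeded model, `α` is terminal if no tile can be attached `τ`-stably to it. -/
def STerminal {T : Type} (ts : TileSystem T) (τ : ℕ) (α : Assembly T) : Prop :=
  ∀ (p : ℤ × ℤ) (t : T), α p = none →
    ¬ ((∃ d ∈ dirs, (α (p + d)).isSome) ∧ Stable ts (Function.update α p (some t)) τ)

/-- The seeded system uniquely produces `α` if its set of producible terminal
assemblies equals `{α}`. -/
def SUniquelyProduces {T : Type} (ts : TileSystem T) (σ : Assembly T) (τ : ℕ)
    (α : Assembly T) : Prop :=
  {γ : Assembly T | SProducible ts σ τ γ ∧ STerminal ts τ γ} = {α}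

/-- The binding graph of `α` is connected: any two positions of its domain are
joined by a path of interacting positions. -/
def BindingConnected {T : Type} (ts : TileSystem T) (α : Assembly T) : Prop :=
  ∀ p q, (α p).isSome → (α q).isSome → Relation.ReflTransGen (Interacts ts α) p q

lemma neg_mem_dirs {d : ℤ × ℤ} (h : d ∈ dirs) : -d ∈ dirs := by
  simp only [dirs, Finset.mem_insert, Finset.mem_singleton] at h ⊢
  rcases h with h|h|h|h <;> subst h <;> simp [Prod.ext_iff]

lemma bond_some {T : Type} (ts : TileSystem T) (α : Assembly T) {p q : ℤ × ℤ} {t t' : T}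
    (hp : α p = some t) (hq : α q = some t') :
    bond ts α p q = if q - p ∈ dirs ∧ ts.glue t (q - p) = ts.glue t' (p - q)
      then ts.str (ts.glue t (q - p)) else 0 := by
  unfold bond; rw [hp, hq]

lemma bond_update_ne {T : Type} (ts : TileSystem T) (α : Assembly T) (p : ℤ × ℤ) (t : T)
    {a b : ℤ × ℤ} (ha : a ≠ p) (hb : b ≠ p) :
    bond ts (Function.update α p (some t)) a b = bond ts α a b := by
  unfold bond
  rw [Function.update_of_ne ha, Function.update_of_ne hb]

lemma sprod_dom_stable {T : Type} (ts : TileSystem T) (σ : Assembly T) (τ : ℕ)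
    (Dσ : Finset (ℤ × ℤ)) (hσdom : IsDom σ Dσ) (hσstable : Stable ts σ τ)
    {α : Assembly T} (h : SProducible ts σ τ α) :
    (∃ D, IsDom α D) ∧ Stable ts α τ := by
  induction h with
  | seed => exact ⟨⟨Dσ, hσdom⟩, hσstable⟩
  | attach p t hprod hnone hadj hstab ih =>
    obtain ⟨⟨D, hD⟩, _⟩ := ih
    refine ⟨⟨insert p D, fun q => ?_⟩, hstab⟩
    by_cases hq : q = p <;> simp [Function.update_apply, hq, hD q]

lemma stable_update {T : Type} (ts : TileSystem T) (α : Assembly T) (D : Finset (ℤ × ℤ))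
    (hD : IsDom α D) (hstab : Stable ts α 1) (q : ℤ × ℤ) (t' : T)
    (hq : α q = none) (c : ℤ × ℤ) (hc : c ∈ D)
    (h1 : 0 < bond ts (Function.update α q (some t')) q c)
    (h2 : 0 < bond ts (Function.update α q (some t')) c q) :
    Stable ts (Function.update α q (some t')) 1 := by
  set α' := Function.update α q (some t') with hα'
  intro D' A B hD' hAB hdisj hA hB
  have hqD : q ∉ D := by rw [← hD q, hq]; simp
  have hD'eq : D' = insert q D := by
    ext r
    rw [← hD' r, hα', Function.update_apply]
    by_cases h : r = q <;> simp [h, hD r]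
  have hqAB : q ∈ A ∪ B := by rw [hAB, hD'eq]; exact Finset.mem_insert_self _ _
  have hmemD : ∀ r, r ∈ D → r ∈ A ∪ B := by
    intro r hr; rw [hAB, hD'eq]; exact Finset.mem_insert_of_mem hr
  rcases Finset.mem_union.mp hqAB with hqA | hqB
  · have hqB : q ∉ B := Finset.disjoint_left.mp hdisj hqA
    by_cases hA' : (A \ {q}).Nonempty
    · have hUnion : (A \ {q}) ∪ B = D := by
        ext r
        simp only [Finset.mem_union, Finset.mem_sdiff, Finset.mem_singleton]
        constructor
        · rintro (⟨hrA, hrq⟩ | hrB)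
          · have : r ∈ insert q D := by
              rw [← hD'eq, ← hAB]; exact Finset.mem_union_left _ hrA
            rcases Finset.mem_insert.mp this with h | h
            · exact absurd h hrq
            · exact h
          · have : r ∈ insert q D := by
              rw [← hD'eq, ← hAB]; exact Finset.mem_union_right _ hrB
            rcases Finset.mem_insert.mp this with h | h
            · exact absurd (h ▸ hrB) hqB
            · exact h
        · intro hrD
          have hrq : r ≠ q := fun h => hqD (h ▸ hrD)
          rcases Finset.mem_union.mp (hmemD r hrD) with h | h
          · exact Or.inl ⟨h, hrq⟩
          · exact Or.inr h
      have hdisj' : Disjoint (A \ {q}) B :=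
        Finset.disjoint_of_subset_left Finset.sdiff_subset hdisj
      have hstr := hstab D (A \ {q}) B hD hUnion hdisj' hA' hB
      have heq : strengthBetween ts α' (A \ {q}) B = strengthBetween ts α (A \ {q}) B := by
        unfold strengthBetween
        refine Finset.sum_congr rfl fun a ha => Finset.sum_congr rfl fun b hb => ?_
        have ha' : a ≠ q := by
          have := (Finset.mem_sdiff.mp ha).2; simpa using this
        have hb' : b ≠ q := fun h => hqB (h ▸ hb)
        exact bond_update_ne ts α q t' ha' hb'
      calc (1 : ℕ) ≤ strengthBetween ts α (A \ {q}) B := hstr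
        _ = strengthBetween ts α' (A \ {q}) B := heq.symm
        _ ≤ strengthBetween ts α' A B := by
            unfold strengthBetween
            exact Finset.sum_le_sum_of_subset Finset.sdiff_subset
    · have hAq : A = {q} := by
        apply Finset.Subset.antisymm
        · intro r hr
          by_contra h
          exact hA' ⟨r, Finset.mem_sdiff.mpr ⟨hr, by simpa using h⟩⟩
        · exact Finset.singleton_subset_iff.mpr hqA
      have hcB : c ∈ B := by
        rcases Finset.mem_union.mp (hmemD c hc) with h | h
        · rw [hAq] at h; simp at h; exact absurd (h ▸ hc) hqD
        · exact h
      unfold strengthBetween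
      rw [hAq, Finset.sum_singleton]
      exact le_trans h1 (Finset.single_le_sum (fun _ _ => Nat.zero_le _) hcB)
  · have hqA : q ∉ A := Finset.disjoint_right.mp hdisj hqB
    by_cases hB' : (B \ {q}).Nonempty
    · have hUnion : A ∪ (B \ {q}) = D := by
        ext r
        simp only [Finset.mem_union, Finset.mem_sdiff, Finset.mem_singleton]
        constructor
        · rintro (hrA | ⟨hrB, hrq⟩)
          · have : r ∈ insert q D := by
              rw [← hD'eq, ← hAB]; exact Finset.mem_union_left _ hrA
            rcases Finset.mem_insert.mp this with h | h
            · exact absurd (h ▸ hrA) hqA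
            · exact h
          · have : r ∈ insert q D := by
              rw [← hD'eq, ← hAB]; exact Finset.mem_union_right _ hrB
            rcases Finset.mem_insert.mp this with h | h
            · exact absurd h hrq
            · exact h
        · intro hrD
          have hrq : r ≠ q := fun h => hqD (h ▸ hrD)
          rcases Finset.mem_union.mp (hmemD r hrD) with h | h
          · exact Or.inl h
          · exact Or.inr ⟨h, hrq⟩
      have hdisj' : Disjoint A (B \ {q}) :=
        Finset.disjoint_of_subset_right Finset.sdiff_subset hdisj
      have hstr := hstab D A (B \ {q}) hD hUnion hdisj' hA hB'
      have heq : strengthBetween ts α' A (B \ {q}) = strengthBetween ts α A (B \ {q}) := by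
        unfold strengthBetween
        refine Finset.sum_congr rfl fun a ha => Finset.sum_congr rfl fun b hb => ?_
        have ha' : a ≠ q := fun h => hqA (h ▸ ha)
        have hb' : b ≠ q := by
          have := (Finset.mem_sdiff.mp hb).2; simpa using this
        exact bond_update_ne ts α q t' ha' hb'
      calc (1 : ℕ) ≤ strengthBetween ts α A (B \ {q}) := hstr
        _ = strengthBetween ts α' A (B \ {q}) := heq.symm
        _ ≤ strengthBetween ts α' A B := by
            unfold strengthBetween
            exact Finset.sum_le_sum fun a _ =>
              Finset.sum_le_sum_of_subset Finset.sdiff_subset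
    · have hBq : B = {q} := by
        apply Finset.Subset.antisymm
        · intro r hr
          by_contra h
          exact hB' ⟨r, Finset.mem_sdiff.mpr ⟨hr, by simpa using h⟩⟩
        · exact Finset.singleton_subset_iff.mpr hqB
      have hcA : c ∈ A := by
        rcases Finset.mem_union.mp (hmemD c hc) with h | h
        · exact h
        · rw [hBq] at h; simp at h; exact absurd (h ▸ hc) hqD
      have : strengthBetween ts α' A B = ∑ a ∈ A, bond ts α' a q := by
        unfold strengthBetween
        rw [hBq]
        simp
      rw [this]
      exact le_trans h2 (Finset.single_le_sum (f := fun a => bond ts α' a q)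
        (fun _ _ => Nat.zero_le _) hcA)

/-- Suppose `T` has no functionally null glues (every
positive-strength glue appearing in some direction also appears on some tile
type in the opposite direction).  In a seeded system at temperature 1, a
producible assembly `α` is terminal if and only if every glue on an unbound
side of `α` has strength 0. -/
theorem seeded_temp1_terminal_iff_null_boundary {T : Type} [Fintype T]
    (ts : TileSystem T)
    (hnull : ∀ (t : T) (d : ℤ × ℤ), d ∈ dirs → 0 < ts.str (ts.glue t d) →
      ∃ t' : T, ts.glue t' (-d) = ts.glue t d)
    (σ : Assembly T)
    (Dσ : Finset (ℤ × ℤ)) (hσdom : IsDom σ Dσ) (hσne : Dσ.Nonempty)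
    (hσstable : Stable ts σ 1)
    (α : Assembly T) (hα : SProducible ts σ 1 α) :
    STerminal ts 1 α ↔
      ∀ (p : ℤ × ℤ) (t : T) (d : ℤ × ℤ), α p = some t → d ∈ dirs →
        α (p + d) = none → ts.str (ts.glue t d) = 0 := by
  obtain ⟨⟨D, hD⟩, hstab⟩ := sprod_dom_stable ts σ 1 Dσ hσdom hσstable hα
  constructor
  · -- terminal → boundary glues null
    intro hterm p t d hp hd hpd
    by_contra hpos
    replace hpos : 0 < ts.str (ts.glue t d) := Nat.pos_of_ne_zero hpos
    obtain ⟨t', ht'⟩ := hnull t d hd hpos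
    have hdne : p ≠ p + d := by
      intro h
      rw [← h] at hpd
      rw [hp] at hpd
      cases hpd
    have e1 : p - (p + d) = -d := by ring
    have e2 : (p + d) - p = d := by ring
    have hup1 : Function.update α (p + d) (some t') (p + d) = some t' :=
      Function.update_self _ _ _
    have hup2 : Function.update α (p + d) (some t') p = some t := by
      rw [Function.update_of_ne hdne, hp]
    have hb1 : bond ts (Function.update α (p + d) (some t')) (p + d) p
        = ts.str (ts.glue t d) := by
      rw [bond_some ts _ hup1 hup2, e1, e2, if_pos ⟨neg_mem_dirs hd, ht'⟩, ht']
    have hb2 : bond ts (Function.update α (p + d) (some t')) p (p + d)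
        = ts.str (ts.glue t d) := by
      rw [bond_some ts _ hup2 hup1, e1, e2, if_pos ⟨hd, ht'.symm⟩]
    have hpD : p ∈ D := by rw [← hD p, hp]; simp
    refine hterm (p + d) t' hpd ⟨⟨-d, neg_mem_dirs hd, ?_⟩, ?_⟩
    · have : p + d + -d = p := by ring
      rw [this, hp]; simp
    · exact stable_update ts α D hD hstab (p + d) t' hpd p hpD
        (hb1 ▸ hpos) (hb2 ▸ hpos)
  · -- boundary glues null → terminal
    rintro hb p t hpnone ⟨⟨d, hd, hsome⟩, hst⟩
    have hpD : p ∉ D := by rw [← hD p, hpnone]; simp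
    have hDdom : IsDom (Function.update α p (some t)) (insert p D) := by
      intro r
      rw [Function.update_apply]
      by_cases h : r = p <;> simp [h, hD r]
    have hDne : D.Nonempty := ⟨p + d, (hD _).mp hsome⟩
    have hkey := hst (insert p D) {p} D hDdom ((Finset.insert_eq p D).symm)
      (by simp [Finset.disjoint_singleton_left, hpD]) ⟨p, Finset.mem_singleton_self p⟩ hDne
    have hzero : strengthBetween ts (Function.update α p (some t)) {p} D = 0 := by
      unfold strengthBetween
      rw [Finset.sum_singleton]
      apply Finset.sum_eq_zero
      intro q hq
      have hqp : q ≠ p := fun h => hpD (h ▸ hq)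
      obtain ⟨tq, htq⟩ := Option.isSome_iff_exists.mp ((hD q).mpr hq)
      have hu1 : Function.update α p (some t) p = some t := Function.update_self _ _ _
      have hu2 : Function.update α p (some t) q = some tq := by
        rw [Function.update_of_ne hqp, htq]
      rw [bond_some ts _ hu1 hu2]
      split_ifs with h
      · rw [h.2]
        have hdir : p - q ∈ dirs := by
          have e : p - q = -(q - p) := by ring
          rw [e]; exact neg_mem_dirs h.1
        refine hb q tq (p - q) htq hdir ?_
        have : q + (p - q) = p := by ring
        rw [this]; exact hpnone
      · rfl
    rw [hzero] at hkey
    exact Nat.not_succ_le_zero 0 hkey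
end

section
/- For every full binary tree with n ≥ 1 leaves, the sum over all internal nodes u of min(ℓ(u), r(u)), where ℓ(u) and r(u) denote the number of leaves in the left and right subtrees of u respectively, is at most n · log₂ n. -/
/-- An unlabeled full binary tree: every internal node has exactly two children. -/
inductive FBT where
  | leaf : FBT
  | node : FBT → FBT → FBT

/-- The number of leaves of a full binary tree. -/
def FBT.numLeaves : FBT → ℕ
  | .leaf => 1
  | .node l r => l.numLeaves + r.numLeaves

/-- The sum, over all internal nodes `u`, of `min (ℓ u) (r u)`, where `ℓ u` and
`r u` are the numbers of leaves of the left and right subtrees of `u`. -/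
def FBT.mergeCost : FBT → ℕ
  | .leaf => 0
  | .node l r => min l.numLeaves r.numLeaves + l.mergeCost + r.mergeCost

lemma FBT.one_le_numLeaves (t : FBT) : 1 ≤ t.numLeaves := by
  induction t with
  | leaf => simp [FBT.numLeaves]
  | node l r ihl ihr => simp [FBT.numLeaves]; omega

lemma key (a b : ℝ) (ha : 1 ≤ a) (hab : a ≤ b) :
    a + a * Real.logb 2 a + b * Real.logb 2 b
      ≤ (a + b) * Real.logb 2 (a + b) := by
  have hb : 1 ≤ b := le_trans ha hab
  have h2a : Real.logb 2 (2 * a) = 1 + Real.logb 2 a := by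
    rw [Real.logb_mul (by norm_num) (by linarith),
      Real.logb_self_eq_one (by norm_num)]
  have h1' : Real.logb 2 (2 * a) ≤ Real.logb 2 (a + b) :=
    Real.logb_le_logb_of_le (by norm_num) (by linarith) (by linarith)
  have h2' : Real.logb 2 b ≤ Real.logb 2 (a + b) :=
    Real.logb_le_logb_of_le (by norm_num) (by linarith) (by linarith)
  have h1 : a * Real.logb 2 (2 * a) ≤ a * Real.logb 2 (a + b) :=
    mul_le_mul_of_nonneg_left h1' (by linarith)
  have h2 : b * Real.logb 2 b ≤ b * Real.logb 2 (a + b) :=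
    mul_le_mul_of_nonneg_left h2' (by linarith)
  nlinarith [h1, h2, h2a]

/-- For every full binary tree with `n ≥ 1` leaves, the sum
over all internal nodes `u` of `min (ℓ u) (r u)` is at most `n · log₂ n`. -/
theorem mergeCost_le_n_log_n (t : FBT) :
    (t.mergeCost : ℝ) ≤ (t.numLeaves : ℝ) * Real.logb 2 (t.numLeaves : ℝ) := by
  induction t with
  | leaf => simp [FBT.mergeCost, FBT.numLeaves]
  | node l r ihl ihr =>
    have hl := l.one_le_numLeaves
    have hr := r.one_le_numLeaves
    have hl' : (1:ℝ) ≤ (l.numLeaves : ℝ) := by exact_mod_cast hl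
    have hr' : (1:ℝ) ≤ (r.numLeaves : ℝ) := by exact_mod_cast hr
    simp only [FBT.mergeCost, FBT.numLeaves, Nat.cast_add, Nat.cast_min]
    rcases le_total l.numLeaves r.numLeaves with h | h
    · have h' : (l.numLeaves : ℝ) ≤ (r.numLeaves : ℝ) := by exact_mod_cast h
      have := key (l.numLeaves : ℝ) (r.numLeaves : ℝ) hl' h'
      have hmin : min (l.numLeaves : ℝ) (r.numLeaves : ℝ) = (l.numLeaves : ℝ) :=
        min_eq_left h'
      rw [hmin]
      linarith
    · have h' : (r.numLeaves : ℝ) ≤ (l.numLeaves : ℝ) := by exact_mod_cast h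
      have := key (r.numLeaves : ℝ) (l.numLeaves : ℝ) hr' h'
      have hmin : min (l.numLeaves : ℝ) (r.numLeaves : ℝ) = (r.numLeaves : ℝ) :=
        min_eq_right h'
      rw [hmin]
      rw [add_comm (r.numLeaves : ℝ) (l.numLeaves : ℝ)] at this
      linarith
end
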